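/- Let W be an elliptic curve over a field F with abelian point group W.Point, let i ≠ j in Fin 9, and define T : (Fin 9 → W.Point) → (Fin 9 → W.Point) by T(Q) l = Q l for l ≠ i, j, T(Q) j = Q j − δ(Q), and T(Q) i = Q i + δ(Q), where δ(Q) = ∑_{l} Q l. Let k ∈ ℕ and let P : Fin 9 → W.Point satisfy k • δ(P) = 0 (i.e. the nine points are base points of a Halphen pencil of index k). Then the k-th iterate of T fixes P: T^[k](P) = P, so the k-th iteration of the elliptic Painlevé mapping is autonomous on the parameters. -/

import Mathlib

lemma aux_sum {A : Type*} [AddCommGroup A] {n : ℕ} [NeZero n] (i j : Fin n) (hij : i ≠ j)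
    (f : Fin n → A) (c : A) :
    ∑ l, (if l = i then f i + c else if l = j then f j - c else f l) = ∑ l, f l := by
  have h : ∀ l, (if l = i then f i + c else if l = j then f j - c else f l)
      = f l + ((if l = i then c else 0) + (if l = j then -c else 0)) := by
    intro l
    by_cases h1 : l = i
    · subst h1; simp [hij]
    · by_cases h2 : l = j <;> simp [h1, h2, Ne.symm hij, sub_eq_add_neg]
  simp only [h, Finset.sum_add_distrib, Finset.sum_ite_eq', Finset.mem_univ, if_true]
  simp

open WeierstrassCurve Classical in
/-- The transformation of the nine parameter points under the elliptic Painlevé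
mapping `T_{ij}`: `T(Q) l = Q l` for `l ≠ i, j`, `T(Q) i = Q i + δ(Q)` and
`T(Q) j = Q j - δ(Q)`, where `δ(Q) = ∑ l, Q l` in the group of points of the
elliptic curve. -/
noncomputable def painleveParamMap {F : Type*} [Field F]
    (W : WeierstrassCurve F) [W.IsElliptic] (i j : Fin 9)
    (Q : Fin 9 → W.toAffine.Point) : Fin 9 → W.toAffine.Point :=
  fun l =>
    if l = i then Q i + ∑ m, Q m
    else if l = j then Q j - ∑ m, Q m
    else Q l

open Classical in
/-- Proposition 1: if the nine parameter points are the base points of a Halphen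
pencil of index `k`, i.e. `k • (∑ l, P l) = 0` in the group law on the cubic curve
through the nine points, then the `k`-th iteration of the elliptic Painlevé mapping
is autonomous on the parameters: `T^[k] P = P`. -/
theorem painleve_halphen_autonomous {F : Type*} [Field F]
    (W : WeierstrassCurve F) [W.IsElliptic] (i j : Fin 9) (hij : i ≠ j)
    (k : ℕ) (P : Fin 9 → W.toAffine.Point) (hP : k • (∑ l, P l) = 0) :
    (painleveParamMap W i j)^[k] P = P := by
  set d := ∑ l, P l with hd
  have key : ∀ n : ℕ, (painleveParamMap W i j)^[n] P
      = fun l => if l = i then P i + n • d else if l = j then P j - n • d else P l := by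
    intro n
    induction n with
    | zero =>
      funext l
      simp only [Function.iterate_zero, id_eq, zero_smul, add_zero, sub_zero]
      by_cases h1 : l = i
      · subst h1; simp
      · by_cases h2 : l = j <;> simp [h1, h2, Ne.symm hij]
    | succ n ih =>
      rw [Function.iterate_succ_apply', ih]
      funext l
      have hsum : (∑ m, (if m = i then P i + n • d else if m = j then P j - n • d else P m)) = d :=
        aux_sum i j hij P (n • d)
      simp only [painleveParamMap, hsum]
      by_cases h1 : l = i
      · subst h1
        simp [hij, succ_nsmul, add_assoc]
      · by_cases h2 : l = j
        · subst h2
          simp only [if_neg h1, if_pos rfl, if_neg (Ne.symm hij), succ_nsmul]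
          abel_nf
          simp [add_assoc]
        · simp [h1, h2]
  rw [key k]
  funext l
  rw [hP]
  by_cases h1 : l = i
  · subst h1; simp
  · by_cases h2 : l = j <;> simp [h1, h2, Ne.symm hij]
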